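/- Let p be an odd prime and ℓ = (p−1)/2. Let M_p be the ℓ×ℓ integer matrix with entries (M_p)_{i,j} = 2·((ij) mod p) − p for 1 ≤ i, j ≤ ℓ, and let D_p be the ℓ×ℓ integer matrix (Maillet's matrix) with entries (D_p)_{i,j} = (i·j*) mod p for 1 ≤ i, j ≤ ℓ, where j* denotes the multiplicative inverse of j modulo p and (x mod p) denotes the least positive residue in {1,…,p−1}. Then |det(M_p)| = 2^{ℓ−1} · |det(D_p)|. -/

import Mathlib

open Finset

/-- The `ℓ × ℓ` integer matrix `M_p` with entries `2·((i·j) mod p) − p` (1-indexed). -/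
def mMatrix (p : ℕ) : Matrix (Fin ((p - 1) / 2)) (Fin ((p - 1) / 2)) ℤ := fun i j =>
  2 * ((((i : ℕ) + 1) * ((j : ℕ) + 1)) % p : ℕ) - p

/-- Maillet's matrix `D_p`, with entries the least positive residue of `i·j*` modulo `p`,
where `j*` is the inverse of `j` modulo `p` (all 1-indexed). -/
def mailletMatrix (p : ℕ) : Matrix (Fin ((p - 1) / 2)) (Fin ((p - 1) / 2)) ℤ := fun i j =>
  ((((i : ℕ) + 1) * ((((j : ℕ) + 1 : ℕ) : ZMod p)⁻¹.val) % p : ℕ) : ℤ)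

namespace MailletAux

noncomputable def tinv (p : ℕ) (j : Fin ((p - 1) / 2)) : ℕ :=
  ((((j : ℕ) + 1 : ℕ) : ZMod p)⁻¹).val

def bMatrix (p : ℕ) (hl : 0 < (p - 1) / 2) :
    Matrix (Fin ((p - 1) / 2)) (Fin ((p - 1) / 2)) ℤ := fun t s =>
  (if t = s then 2 else 0) - (if t = ⟨0, hl⟩ then 2 else 0) -
    (if t = ⟨(p - 1) / 2 - 1, by omega⟩ then 1 else 0)

noncomputable def sigmaFun (p : ℕ) (j : Fin ((p - 1) / 2)) : Fin ((p - 1) / 2) :=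
  if h : 0 < tinv p j ∧ tinv p j ≤ (p - 1) / 2 then ⟨tinv p j - 1, by omega⟩
  else if h2 : (p - 1) / 2 < tinv p j ∧ tinv p j < p ∧ p = 2 * ((p - 1) / 2) + 1 then
    ⟨p - tinv p j - 1, by omega⟩
  else j

noncomputable def epsFun (p : ℕ) (j : Fin ((p - 1) / 2)) : ℤ :=
  if tinv p j ≤ (p - 1) / 2 then 1 else -1

section

lemma p_eq {p : ℕ} (hodd : Odd p) : p = 2 * ((p - 1) / 2) + 1 := by
  obtain ⟨k, hk⟩ := hodd; omega

lemma three_le {p : ℕ} (hp : p.Prime) (hodd : Odd p) : 3 ≤ p := by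
  have h1 := hp.two_le
  have h2 := Nat.odd_iff.mp hodd
  omega

variable {p : ℕ}

lemma jlt (hodd : Odd p) (j : Fin ((p - 1) / 2)) : (j : ℕ) + 1 < p := by
  have h1 := p_eq hodd; have h2 := j.isLt; omega

lemma jcast_val (hp : p.Prime) (hodd : Odd p) (j : Fin ((p - 1) / 2)) :
    ((((j : ℕ) + 1 : ℕ) : ZMod p)).val = (j : ℕ) + 1 := by
  haveI : NeZero p := ⟨hp.ne_zero⟩
  exact ZMod.val_cast_of_lt (jlt hodd j)

lemma jcast_ne (hp : p.Prime) (hodd : Odd p) (j : Fin ((p - 1) / 2)) :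
    ((((j : ℕ) + 1 : ℕ) : ZMod p)) ≠ 0 := by
  intro h
  have h2 := jcast_val hp hodd j
  rw [h, ZMod.val_zero] at h2
  omega

lemma cast_tinv (hp : p.Prime) (j : Fin ((p - 1) / 2)) :
    ((tinv p j : ℕ) : ZMod p) = ((((j : ℕ) + 1 : ℕ) : ZMod p))⁻¹ := by
  haveI : NeZero p := ⟨hp.ne_zero⟩
  exact ZMod.natCast_rightInverse _

lemma tinv_lt (hp : p.Prime) (j : Fin ((p - 1) / 2)) : tinv p j < p := by
  haveI : NeZero p := ⟨hp.ne_zero⟩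
  exact ZMod.val_lt _

lemma tinv_pos (hp : p.Prime) (hodd : Odd p) (j : Fin ((p - 1) / 2)) : 0 < tinv p j := by
  haveI := Fact.mk hp
  have hne : (((j : ℕ) + 1 : ℕ) : ZMod p)⁻¹ ≠ 0 := inv_ne_zero (jcast_ne hp hodd j)
  rw [tinv]
  exact Nat.pos_of_ne_zero fun h => hne ((ZMod.val_eq_zero _).mp h)

lemma neg_natCast_val (hp : p.Prime) (a : ℕ) (h : ¬ p ∣ a) :
    ((-(a : ZMod p)).val) = p - a % p := by
  haveI : NeZero p := ⟨hp.ne_zero⟩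
  have hne : ((a : ℕ) : ZMod p) ≠ 0 := by
    rw [Ne, ZMod.natCast_eq_zero_iff]; exact h
  rw [ZMod.neg_val, if_neg hne, ZMod.val_natCast]

lemma maillet_zero (hp : p.Prime) (hodd : Odd p) (r j : Fin ((p - 1) / 2))
    (hj : (j : ℕ) = 0) : mailletMatrix p r j = ((r : ℕ) : ℤ) + 1 := by
  haveI := Fact.mk hp
  haveI : Fact (1 < p) := ⟨hp.one_lt⟩
  rw [mailletMatrix, hj]
  norm_num [ZMod.val_one, Nat.mod_eq_of_lt (jlt hodd r)]

lemma inv_half (hp : p.Prime) (hodd : Odd p) :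
    ((((p - 1) / 2 : ℕ)) : ZMod p)⁻¹ = ((p - 2 : ℕ) : ZMod p) := by
  haveI := Fact.mk hp
  apply inv_eq_of_mul_eq_one_right
  have hz : ((2 * ((p - 1) / 2) + 1 : ℕ) : ZMod p) = 0 := by
    rw [← p_eq hodd]; exact ZMod.natCast_self p
  have hz2 : ((p - 2 : ℕ) : ZMod p) = -2 := by
    have h3 : ((p - 2 : ℕ) : ZMod p) + ((2 : ℕ) : ZMod p) = ((p : ℕ) : ZMod p) := by
      rw [← Nat.cast_add]; congr 1; have := three_le hp hodd; omega
    rw [ZMod.natCast_self] at h3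
    push_cast at h3 ⊢
    linear_combination h3
  rw [hz2]
  push_cast at hz ⊢
  linear_combination -hz

lemma tinv_last (hp : p.Prime) (hodd : Odd p) (j : Fin ((p - 1) / 2))
    (hj : (j : ℕ) = (p - 1) / 2 - 1) : tinv p j = p - 2 := by
  haveI := Fact.mk hp
  haveI : NeZero p := ⟨hp.ne_zero⟩
  have h3 := three_le hp hodd
  have hpe := p_eq hodd
  have hj1 : (j : ℕ) + 1 = (p - 1) / 2 := by have := j.isLt; omega
  rw [tinv, hj1, inv_half hp hodd]
  apply ZMod.val_cast_of_lt; omega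

lemma maillet_last (hp : p.Prime) (hodd : Odd p) (r j : Fin ((p - 1) / 2))
    (hj : (j : ℕ) = (p - 1) / 2 - 1) :
    mailletMatrix p r j = (p : ℤ) - 2 * ((r : ℕ) + 1) := by
  haveI := Fact.mk hp
  haveI : NeZero p := ⟨hp.ne_zero⟩
  have h3 := three_le hp hodd
  have hpe := p_eq hodd
  have hrl := r.isLt
  have ht : ((((j : ℕ) + 1 : ℕ) : ZMod p)⁻¹).val = p - 2 := tinv_last hp hodd j hj
  rw [mailletMatrix, ht]
  have key : ((r : ℕ) + 1) * (p - 2) % p = p - 2 * ((r : ℕ) + 1) := by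
    have h4 : (((((r : ℕ) + 1) * (p - 2) : ℕ)) : ZMod p).val
        = ((((r : ℕ) + 1) * (p - 2) : ℕ)) % p := ZMod.val_natCast _ _
    have h5 : (((((r : ℕ) + 1) * (p - 2) : ℕ)) : ZMod p)
        = -((2 * ((r : ℕ) + 1) : ℕ) : ZMod p) := by
      have hz2 : ((p - 2 : ℕ) : ZMod p) + 2 = 0 := by
        have h6 : ((p - 2 : ℕ) : ZMod p) + ((2 : ℕ) : ZMod p) = ((p : ℕ) : ZMod p) := by
          rw [← Nat.cast_add]; congr 1; omega
        rw [ZMod.natCast_self] at h6; push_cast at h6 ⊢; linear_combination h6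
      push_cast
      linear_combination (((r : ℕ) : ZMod p) + 1) * hz2
    have h7 : ((-((2 * ((r : ℕ) + 1) : ℕ) : ZMod p)).val) = p - (2 * ((r : ℕ) + 1)) % p := by
      apply neg_natCast_val hp
      intro hdvd
      have := Nat.le_of_dvd (by omega) hdvd
      omega
    rw [← h4, h5, h7, Nat.mod_eq_of_lt (by omega)]
  rw [key]
  have : 2 * ((r : ℕ) + 1) ≤ p := by omega
  push_cast [Nat.cast_sub this]
  ring

lemma maillet_mul_b (hp : p.Prime) (hodd : Odd p) (hl : 0 < (p - 1) / 2) :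
    mailletMatrix p * bMatrix p hl =
      Matrix.of (fun r s => 2 * mailletMatrix p r s - (p : ℤ)) := by
  ext r s
  have hsum : (mailletMatrix p * bMatrix p hl) r s
      = mailletMatrix p r s * 2 - mailletMatrix p r ⟨0, hl⟩ * 2
        - mailletMatrix p r ⟨(p - 1) / 2 - 1, by omega⟩ := by
    simp [Matrix.mul_apply, bMatrix, mul_sub, Finset.sum_sub_distrib, mul_ite, mul_zero,
      Finset.sum_ite_eq']
  rw [hsum, maillet_zero hp hodd r ⟨0, hl⟩ rfl, maillet_last hp hodd r ⟨(p - 1) / 2 - 1, by omega⟩ rfl]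
  simp only [Matrix.of_apply]
  ring

lemma det_bMatrix (hl0 : 0 < (p - 1) / 2) :
    (bMatrix p hl0).det = -(2 ^ ((p - 1) / 2 - 1)) := by
  set u : Fin ((p - 1) / 2) → ℚ := fun t =>
    -(if t = ⟨0, hl0⟩ then 1 else 0) -
      (if t = ⟨(p - 1) / 2 - 1, by omega⟩ then 1/2 else 0) with hu
  have hmap : (bMatrix p hl0).map (Int.cast : ℤ → ℚ)
      = (2 : ℚ) • (1 + Matrix.replicateCol Unit u * Matrix.replicateRow Unit (fun _ => (1 : ℚ))) := by
    ext t s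
    simp only [Matrix.map_apply, bMatrix, Matrix.smul_apply, Matrix.add_apply,
      Matrix.one_apply, Matrix.mul_apply, Matrix.replicateCol_apply, Matrix.replicateRow_apply,
      Finset.univ_unique, Finset.sum_singleton, hu, smul_eq_mul]
    split_ifs <;> norm_num
  have hdetq : ((bMatrix p hl0).map (Int.cast : ℤ → ℚ)).det = -(2 ^ ((p - 1) / 2 - 1)) := by
    rw [hmap, Matrix.det_smul, Matrix.det_one_add_replicateCol_mul_replicateRow]
    have hdot : dotProduct (fun _ : Fin ((p - 1) / 2) => (1 : ℚ)) u = -1 - 1/2 := by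
      simp [dotProduct, hu, Finset.sum_sub_distrib, Finset.sum_ite_eq']
    rw [hdot, Fintype.card_fin]
    have h2 : (2 : ℚ) ^ ((p - 1) / 2) = 2 ^ ((p - 1) / 2 - 1) * 2 := by
      rw [← pow_succ]; congr 1; omega
    rw [h2]; ring
  have hc : (((bMatrix p hl0).det : ℤ) : ℚ) = -(2 ^ ((p - 1) / 2 - 1)) := by
    have h := RingHom.map_det (Int.castRingHom ℚ) (bMatrix p hl0)
    simp only [RingHom.mapMatrix_apply, Int.coe_castRingHom] at h
    rw [h, hdetq]
  exact_mod_cast hc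

lemma key (hp : p.Prime) (hodd : Odd p) (r j : Fin ((p - 1) / 2)) :
    mMatrix p r j = (2 * mailletMatrix p r (sigmaFun p j) - (p : ℤ)) * epsFun p j := by
  haveI := Fact.mk hp
  haveI : NeZero p := ⟨hp.ne_zero⟩
  have hpe := p_eq hodd
  have h3 := three_le hp hodd
  have ht0 := tinv_pos hp hodd j
  have htp := tinv_lt hp j
  have hct := cast_tinv hp j
  by_cases h : tinv p j ≤ (p - 1) / 2
  · have htv : ((((tinv p j - 1) + 1 : ℕ)) : ZMod p)⁻¹.val = (j : ℕ) + 1 := by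
      rw [show tinv p j - 1 + 1 = tinv p j from by omega, hct, inv_inv]
      exact jcast_val hp hodd j
    have hD : mailletMatrix p r (sigmaFun p j)
        = (((((r : ℕ) + 1) * ((j : ℕ) + 1)) % p : ℕ) : ℤ) := by
      rw [sigmaFun, dif_pos ⟨ht0, h⟩]
      show ((((r : ℕ) + 1) * ((((tinv p j - 1) + 1 : ℕ) : ZMod p)⁻¹.val) % p : ℕ) : ℤ) = _
      rw [htv]
    rw [hD, epsFun, if_pos h, mul_one]
    rfl
  · have hnj : ¬ (0 < tinv p j ∧ tinv p j ≤ (p - 1) / 2) := fun hc => h hc.2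
    have hcast1 : ((p - tinv p j : ℕ) : ZMod p) = -((tinv p j : ℕ) : ZMod p) := by
      have ha : ((p - tinv p j) + tinv p j : ℕ) = p := by omega
      have h9 : (((p - tinv p j) + tinv p j : ℕ) : ZMod p) = 0 := by
        rw [ha]; exact ZMod.natCast_self p
      push_cast at h9
      linear_combination h9
    have hnd : ¬ p ∣ ((j : ℕ) + 1) := by
      intro hd
      have h5 := Nat.le_of_dvd (by omega) hd
      have h6 := jlt hodd j
      omega
    have htv : (((p - tinv p j - 1 + 1 : ℕ)) : ZMod p)⁻¹.val = p - ((j : ℕ) + 1) := by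
      rw [show p - tinv p j - 1 + 1 = p - tinv p j from by omega, hcast1, hct, inv_neg, inv_inv]
      rw [neg_natCast_val hp _ hnd, Nat.mod_eq_of_lt (jlt hodd j)]
    have hD : mailletMatrix p r (sigmaFun p j)
        = (((((r : ℕ) + 1) * (p - ((j : ℕ) + 1))) % p : ℕ) : ℤ) := by
      rw [sigmaFun, dif_neg hnj, dif_pos ⟨by omega, htp, hpe⟩]
      show ((((r : ℕ) + 1) * (((p - tinv p j - 1 + 1 : ℕ) : ZMod p)⁻¹.val) % p : ℕ) : ℤ) = _
      rw [htv]
    have hmod : (((r : ℕ) + 1) * (p - ((j : ℕ) + 1))) % p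
        = p - ((((r : ℕ) + 1) * ((j : ℕ) + 1)) % p) := by
      have hv : (((((r : ℕ) + 1) * (p - ((j : ℕ) + 1)) : ℕ)) : ZMod p)
          = -((((((r : ℕ) + 1) * ((j : ℕ) + 1) : ℕ))) : ZMod p) := by
        have h9 : ((p - ((j : ℕ) + 1) : ℕ) : ZMod p) = -(((j : ℕ) : ZMod p) + 1) := by
          have ha : ((p - ((j : ℕ) + 1)) + ((j : ℕ) + 1) : ℕ) = p := by
            have := jlt hodd j; omega
          have h10 : (((p - ((j : ℕ) + 1)) + ((j : ℕ) + 1) : ℕ) : ZMod p) = 0 := by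
            rw [ha]; exact ZMod.natCast_self p
          push_cast at h10
          linear_combination h10
        push_cast [h9]
        ring
      have hnd2 : ¬ p ∣ (((r : ℕ) + 1) * ((j : ℕ) + 1)) := by
        intro hd
        rcases (Nat.Prime.dvd_mul hp).mp hd with hd1 | hd1 <;>
          · have h5 := Nat.le_of_dvd (by omega) hd1
            have h6 := jlt hodd j
            have h7 := jlt hodd r
            omega
      have h8 := neg_natCast_val hp (((r : ℕ) + 1) * ((j : ℕ) + 1)) hnd2
      rw [← ZMod.val_natCast, hv, h8]
    have hlt : ((((r : ℕ) + 1) * ((j : ℕ) + 1)) % p) < p := Nat.mod_lt _ (by omega)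
    rw [hD, hmod, epsFun, if_neg h]
    show (2 * ((((r : ℕ) + 1) * ((j : ℕ) + 1)) % p : ℕ) - (p : ℤ)) = _
    push_cast [Nat.cast_sub hlt.le]
    ring

lemma tinv_eq_inj (hp : p.Prime) (hodd : Odd p) {j k : Fin ((p - 1) / 2)}
    (h : tinv p j = tinv p k) : j = k := by
  haveI := Fact.mk hp
  have h1 := congrArg (fun n : ℕ => (n : ZMod p)) h
  simp only [cast_tinv hp] at h1
  have h2 := inv_injective h1
  have h4 := congrArg ZMod.val h2
  rw [jcast_val hp hodd, jcast_val hp hodd] at h4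
  exact Fin.ext (by omega)

lemma tinv_add_ne (hp : p.Prime) (hodd : Odd p) (j k : Fin ((p - 1) / 2)) :
    tinv p j + tinv p k ≠ p := by
  haveI := Fact.mk hp
  intro h
  have hc : ((tinv p j + tinv p k : ℕ) : ZMod p) = 0 := by
    rw [h]; exact ZMod.natCast_self p
  rw [Nat.cast_add, cast_tinv hp, cast_tinv hp] at hc
  have hab : (((j : ℕ) + 1 : ℕ) : ZMod p) + (((k : ℕ) + 1 : ℕ) : ZMod p) = 0 := by
    have h1 : ((((j : ℕ) + 1 : ℕ) : ZMod p))⁻¹ = -((((k : ℕ) + 1 : ℕ) : ZMod p))⁻¹ := by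
      linear_combination hc
    have h2 := congrArg (fun x : ZMod p => x⁻¹) h1 -- FIX
    simp only [inv_inv, inv_neg] at h2
    linear_combination h2
  have hz : ((((j : ℕ) + 1) + ((k : ℕ) + 1) : ℕ) : ZMod p) = 0 := by
    push_cast at hab ⊢
    linear_combination hab
  rw [ZMod.natCast_eq_zero_iff] at hz
  have hle := Nat.le_of_dvd (by omega) hz
  have h5 := p_eq hodd
  have h6 := j.isLt
  have h7 := k.isLt
  omega

lemma sigma_inj (hp : p.Prime) (hodd : Odd p) : Function.Injective (sigmaFun p) := by
  intro j k hjk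
  have hpe := p_eq hodd
  have ht0j := tinv_pos hp hodd j
  have ht0k := tinv_pos hp hodd k
  have htpj := tinv_lt hp j
  have htpk := tinv_lt hp k
  have hadd := tinv_add_ne hp hodd j k
  simp only [sigmaFun] at hjk
  by_cases hj : tinv p j ≤ (p - 1) / 2 <;> by_cases hk : tinv p k ≤ (p - 1) / 2
  · rw [dif_pos (show 0 < tinv p j ∧ tinv p j ≤ (p - 1) / 2 from ⟨ht0j, hj⟩), dif_pos (show 0 < tinv p k ∧ tinv p k ≤ (p - 1) / 2 from ⟨ht0k, hk⟩), Fin.mk.injEq] at hjk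
    exact tinv_eq_inj hp hodd (by omega)
  · rw [dif_pos (show 0 < tinv p j ∧ tinv p j ≤ (p - 1) / 2 from ⟨ht0j, hj⟩), dif_neg (show ¬(0 < tinv p k ∧ tinv p k ≤ (p - 1) / 2) from fun hc => hk hc.2),
      dif_pos (show (p - 1) / 2 < tinv p k ∧ tinv p k < p ∧ p = 2 * ((p - 1) / 2) + 1 from ⟨by omega, htpk, hpe⟩), Fin.mk.injEq] at hjk
    omega
  · rw [dif_neg (show ¬(0 < tinv p j ∧ tinv p j ≤ (p - 1) / 2) from fun hc => hj hc.2), dif_pos (show (p - 1) / 2 < tinv p j ∧ tinv p j < p ∧ p = 2 * ((p - 1) / 2) + 1 from ⟨by omega, htpj, hpe⟩),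
      dif_pos (show 0 < tinv p k ∧ tinv p k ≤ (p - 1) / 2 from ⟨ht0k, hk⟩), Fin.mk.injEq] at hjk
    omega
  · rw [dif_neg (show ¬(0 < tinv p j ∧ tinv p j ≤ (p - 1) / 2) from fun hc => hj hc.2), dif_pos (show (p - 1) / 2 < tinv p j ∧ tinv p j < p ∧ p = 2 * ((p - 1) / 2) + 1 from ⟨by omega, htpj, hpe⟩),
      dif_neg (show ¬(0 < tinv p k ∧ tinv p k ≤ (p - 1) / 2) from fun hc => hk hc.2), dif_pos (show (p - 1) / 2 < tinv p k ∧ tinv p k < p ∧ p = 2 * ((p - 1) / 2) + 1 from ⟨by omega, htpk, hpe⟩),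
      Fin.mk.injEq] at hjk
    exact tinv_eq_inj hp hodd (by omega)

end
end MailletAux

/-- `|det M_p| = 2^(ℓ−1) · |det D_p|` for `p` an odd prime, `ℓ = (p−1)/2`, where `D_p` is
Maillet's matrix. -/
theorem det_mMatrix_eq_pow_two_mul_maillet
    (p : ℕ) (hp : p.Prime) (hodd : Odd p) :
    |(mMatrix p).det| = 2 ^ ((p - 1) / 2 - 1) * |(mailletMatrix p).det| := by
  have h3 := MailletAux.three_le hp hodd
  have hl0 : 0 < (p - 1) / 2 := by omega
  set σe : Equiv.Perm (Fin ((p - 1) / 2)) :=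
    Equiv.ofBijective (MailletAux.sigmaFun p)
      ((Finite.injective_iff_bijective).mp (MailletAux.sigma_inj hp hodd)) with hσ
  have hM : mMatrix p =
      ((mailletMatrix p * MailletAux.bMatrix p hl0).submatrix id σe) * Matrix.diagonal (MailletAux.epsFun p) := by
    ext r j
    rw [Matrix.mul_diagonal, MailletAux.maillet_mul_b hp hodd hl0, Matrix.submatrix_apply, id]
    have hσj : σe j = MailletAux.sigmaFun p j := rfl
    rw [hσj, Matrix.of_apply]
    exact MailletAux.key hp hodd r j
  have hdet : (mMatrix p).det
      = ((Equiv.Perm.sign σe : ℤˣ) : ℤ) * ((mailletMatrix p).det * (-(2 ^ ((p - 1) / 2 - 1))))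
        * ∏ j, MailletAux.epsFun p j := by
    rw [hM, Matrix.det_mul, Matrix.det_permute', Matrix.det_diagonal,
      Matrix.det_mul, MailletAux.det_bMatrix hl0]
    push_cast
    ring
  rw [hdet, abs_mul, abs_mul, abs_mul, abs_neg, abs_pow]
  have h1 : |((Equiv.Perm.sign σe : ℤˣ) : ℤ)| = 1 := abs_unit_intCast _
  have h2 : |∏ j, MailletAux.epsFun p j| = 1 := by
    rw [Finset.abs_prod]
    apply Finset.prod_eq_one
    intro j _
    rw [MailletAux.epsFun]
    split_ifs <;> norm_num
  rw [h1, h2, abs_two]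
  ring
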